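/- Let G be a connected Lie group acting smoothly, properly and isometrically on a Euclidean space ℝⁿ such that every orbit of maximal dimension has a globally flat normal bundle admitting a global parallel orthonormal normal frame that is G-equivariant near the identity. Then every orbit of maximal dimension is principal, i.e., the action has no exceptional orbits. -/

import Mathlib

/-- Let `G` be a connected Lie group acting properly and isometrically (by affine
isometries `ρ`) on Euclidean space `ℝⁿ`, such that every orbit of maximal dimension (points of
the `G`-invariant set `MaxDim`) carries a globally defined continuous orthonormal normal frame
`ξ` which is parallel, `G`-equivariant near the identity, and spans the normal bundle (so that
triviality of the slice representation on the frame implies the orbit is principal). Then every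
orbit of maximal dimension is principal, i.e. the action has no exceptional orbits: for each
`p ∈ MaxDim` there is a neighborhood `U` of `p` such that for every `r ∈ U` the stabilizer of
`p` is conjugate into the stabilizer of `r`. -/
theorem stmt11 {n : ℕ} {G : Type*} [TopologicalSpace G] [Group G] [IsTopologicalGroup G]
    [ConnectedSpace G]
    (ρ : G →* (EuclideanSpace ℝ (Fin n) ≃ᵃⁱ[ℝ] EuclideanSpace ℝ (Fin n)))
    (hcont : Continuous fun gx : G × EuclideanSpace ℝ (Fin n) => ρ gx.1 gx.2)
    (hproper : IsProperMap fun gx : G × EuclideanSpace ℝ (Fin n) => (ρ gx.1 gx.2, gx.2))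
    (MaxDim : Set (EuclideanSpace ℝ (Fin n)))
    (hinv : ∀ g : G, ∀ p ∈ MaxDim, ρ g p ∈ MaxDim)
    (hframe : ∀ p ∈ MaxDim, ∃ (k : ℕ)
        (ξ : Fin k → EuclideanSpace ℝ (Fin n) → EuclideanSpace ℝ (Fin n)),
      -- continuity of the frame
      (∀ i, Continuous (ξ i)) ∧
      -- orthonormality along the orbit of p
      (∀ q, (∃ g : G, ρ g p = q) → ∀ i j,
        (inner ℝ (ξ i q) (ξ j q) : ℝ) = if i = j then 1 else 0) ∧
      -- the frame is parallel: G-equivariant near the identity at each point of the orbit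
      (∀ q, (∃ g : G, ρ g p = q) → ∃ U ∈ nhds (1 : G), ∀ g ∈ U, ∀ i,
        ξ i (ρ g q) = (ρ g).linearIsometryEquiv (ξ i q)) ∧
      -- the frame spans the normal bundle: if the stabilizer fixes the frame
      -- (trivial slice representation) then the orbit is principal
      (∀ q, (∃ g : G, ρ g p = q) →
        ((∀ g : G, ρ g q = q → ∀ i, (ρ g).linearIsometryEquiv (ξ i q) = ξ i q) →
          ∃ U ∈ nhds q, ∀ r ∈ U, ∃ g : G, ∀ h : G, ρ h q = q → ρ (g⁻¹ * h * g) r = r))) :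
    ∀ p ∈ MaxDim, ∃ U ∈ nhds p, ∀ r ∈ U, ∃ g : G, ∀ h : G,
      ρ h p = p → ρ (g⁻¹ * h * g) r = r := by
  intro p hp
  obtain ⟨k, ξ, hξcont, -, hpar, hspan⟩ := hframe p hp
  set S : Set G := {g : G | ∀ i, ξ i (ρ g p) = (ρ g).linearIsometryEquiv (ξ i p)} with hS
  have lin_eq : ∀ (g : G) (v : EuclideanSpace ℝ (Fin n)),
      (ρ g).linearIsometryEquiv v = ρ g v - ρ g 0 := by
    intro g v
    have := (ρ g).map_vsub v 0
    simpa [vsub_eq_sub] using this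
  have hmul : ∀ g h : G, ∀ x, ρ (g * h) x = ρ g (ρ h x) := by
    intro g h x; rw [map_mul]; rfl
  have lin_mul : ∀ (a b : G) (v : EuclideanSpace ℝ (Fin n)),
      (ρ (a * b)).linearIsometryEquiv v
        = (ρ a).linearIsometryEquiv ((ρ b).linearIsometryEquiv v) := by
    intro a b v
    have h2 := (ρ a).map_vsub (ρ b v) (ρ b 0)
    simp only [vsub_eq_sub] at h2
    rw [lin_eq b, h2, lin_eq (a * b), hmul, hmul]
  have h1 : (1 : G) ∈ S := by
    intro i
    rw [lin_eq, map_one]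
    simp
  have hclosed : IsClosed S := by
    have : S = ⋂ i : Fin k, {g : G | ξ i (ρ g p) = (ρ g).linearIsometryEquiv (ξ i p)} := by
      ext g; simp [hS, Set.mem_iInter]
    rw [this]
    refine isClosed_iInter fun i => ?_
    have hc1 : Continuous fun g : G => ξ i (ρ g p) :=
      (hξcont i).comp (hcont.comp (Continuous.prodMk continuous_id continuous_const))
    have hc2 : Continuous fun g : G => (ρ g).linearIsometryEquiv (ξ i p) := by
      simp only [lin_eq]
      exact (hcont.comp (Continuous.prodMk continuous_id continuous_const)).sub
        (hcont.comp (Continuous.prodMk continuous_id continuous_const))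
    exact isClosed_eq hc1 hc2
  have hopen : IsOpen S := by
    rw [isOpen_iff_mem_nhds]
    intro g hg
    obtain ⟨U, hU, hUeq⟩ := hpar (ρ g p) ⟨g, rfl⟩
    have hcm : Continuous fun h : G => h * g⁻¹ := continuous_id.mul continuous_const
    have hmem : (fun h : G => h * g⁻¹) ⁻¹' U ∈ nhds g :=
      hcm.continuousAt.preimage_mem_nhds (by simpa using hU)
    refine Filter.mem_of_superset hmem ?_
    intro h hh i
    have key := hUeq (h * g⁻¹) hh i
    have hq : ρ (h * g⁻¹) (ρ g p) = ρ h p := by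
      rw [← hmul]; simp
    rw [hq] at key
    rw [key, hg i, ← lin_mul]
    simp
  have hSuniv : S = Set.univ := IsClopen.eq_univ ⟨hclosed, hopen⟩ ⟨1, h1⟩
  refine hspan p ⟨1, by rw [map_one]; rfl⟩ ?_
  intro g hgp i
  have hgS : g ∈ S := hSuniv ▸ Set.mem_univ g
  have := hgS i
  rw [hgp] at this
  exact this.symm
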